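/- (Real Stone theorem) Let U : ℝ → B(H) be a strongly continuous one-parameter group of unitary operators on a real Hilbert space H. Then the operator A with domain D(A) = {x ∈ H : lim_{h→0} h⁻¹(U_h x − x) exists} and Ax := lim_{h→0} h⁻¹(U_h x − x) is densely defined, anti-selfadjoint (A* = −A), satisfies A U_t = U_t A for all t, and U_t = e^{t A_C}|_H; moreover A is the unique anti-selfadjoint operator with this last property. -/

import Mathlib

open Filter

/-- An operator `A` is anti-selfadjoint: `A* = −A` (same domain, opposite values). -/
def IsAntiSelfAdjointPMap {𝕜 E : Type*} [RCLike 𝕜] [NormedAddCommGroup E]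
    [InnerProductSpace 𝕜 E] [CompleteSpace E] (A : E →ₗ.[𝕜] E) : Prop :=
  A.adjoint.domain = A.domain ∧
    ∀ (x : E) (hx : x ∈ A.domain) (hx' : x ∈ A.adjoint.domain),
      A.adjoint ⟨x, hx'⟩ = -A ⟨x, hx⟩

open intervalIntegral Topology

set_option linter.unusedSectionVars false

local notation "⟪" x ", " y "⟫" => @inner ℝ _ _ x y

namespace RealStone

variable {H : Type*} [NormedAddCommGroup H] [InnerProductSpace ℝ H] [CompleteSpace H]
variable (U : ℝ → H →L[ℝ] H)

/-- The domain of the generator. -/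
def domSet : Submodule ℝ H where
  carrier := {x | ∃ y, Tendsto (fun h : ℝ => h⁻¹ • (U h x - x)) (nhdsWithin 0 {(0:ℝ)}ᶜ) (nhds y)}
  zero_mem' := ⟨0, by simp⟩
  add_mem' := by
    rintro a b ⟨ya, ta⟩ ⟨yb, tb⟩
    refine ⟨ya + yb, ?_⟩
    have : (fun h : ℝ => h⁻¹ • (U h (a + b) - (a + b)))
        = fun h : ℝ => h⁻¹ • (U h a - a) + h⁻¹ • (U h b - b) := by
      funext h
      rw [map_add, ← smul_add]
      congr 1
      abel
    rw [this]
    exact ta.add tb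
  smul_mem' := by
    rintro c a ⟨ya, ta⟩
    refine ⟨c • ya, ?_⟩
    have : (fun h : ℝ => h⁻¹ • (U h (c • a) - c • a))
        = fun h : ℝ => c • (h⁻¹ • (U h a - a)) := by
      funext h
      rw [map_smul, ← smul_sub, smul_comm]
    rw [this]
    exact ta.const_smul c

theorem punctured_eq : (nhdsWithin 0 {(0:ℝ)}ᶜ) = 𝓝[≠] (0:ℝ) := rfl

/-- The generator as a partially defined linear map. -/
noncomputable def gen : H →ₗ.[ℝ] H where
  domain := domSet U
  toFun :=
    { toFun := fun x => Classical.choose x.2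
      map_add' := by
        rintro ⟨a, ha⟩ ⟨b, hb⟩
        have ta := Classical.choose_spec ha
        have tb := Classical.choose_spec hb
        have tab := Classical.choose_spec (Submodule.add_mem _ ha hb : a + b ∈ domSet U)
        refine tendsto_nhds_unique tab ?_
        have : (fun h : ℝ => h⁻¹ • (U h (a + b) - (a + b)))
            = fun h : ℝ => h⁻¹ • (U h a - a) + h⁻¹ • (U h b - b) := by
          funext h; rw [map_add, ← smul_add]; congr 1; abel
        rw [this]
        exact ta.add tb
      map_smul' := by
        rintro c ⟨a, ha⟩
        have ta := Classical.choose_spec ha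
        have tca := Classical.choose_spec (Submodule.smul_mem _ c ha : c • a ∈ domSet U)
        refine tendsto_nhds_unique tca ?_
        have : (fun h : ℝ => h⁻¹ • (U h (c • a) - c • a))
            = fun h : ℝ => c • (h⁻¹ • (U h a - a)) := by
          funext h; rw [map_smul, ← smul_sub, smul_comm]
        rw [this]
        exact ta.const_smul c }

theorem gen_domain : (gen U).domain = domSet U := rfl

theorem gen_spec (x : (gen U).domain) :
    Tendsto (fun h : ℝ => h⁻¹ • (U h (x:H) - (x:H))) (nhdsWithin 0 {(0:ℝ)}ᶜ)
      (nhds (gen U x)) :=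
  Classical.choose_spec x.2

theorem gen_apply_eq {x : H} (hx : x ∈ (gen U).domain) {y : H}
    (hy : Tendsto (fun h : ℝ => h⁻¹ • (U h x - x)) (nhdsWithin 0 {(0:ℝ)}ᶜ) (nhds y)) :
    gen U ⟨x, hx⟩ = y :=
  tendsto_nhds_unique (gen_spec U ⟨x, hx⟩) hy

theorem mem_domSet_iff_hasDerivAt (hU0 : U 0 = 1) (x : H) {y : H} :
    Tendsto (fun h : ℝ => h⁻¹ • (U h x - x)) (nhdsWithin 0 {(0:ℝ)}ᶜ) (nhds y)
      ↔ HasDerivAt (fun t : ℝ => U t x) y 0 := by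
  rw [hasDerivAt_iff_tendsto_slope_zero]
  have : ∀ h : ℝ, U (0 + h) x - U 0 x = U h x - x := by
    intro h; rw [zero_add, hU0]; rfl
  simp only [this]

end RealStone

namespace RealStone

variable {H : Type*} [NormedAddCommGroup H] [InnerProductSpace ℝ H] [CompleteSpace H]
variable (U : ℝ → H →L[ℝ] H)
variable (hU0 : U 0 = 1) (hUadd : ∀ t s : ℝ, U (t + s) = U t * U s)
    (hUiso : ∀ (t : ℝ) (x : H), ‖U t x‖ = ‖x‖)
    (hUcont : ∀ x : H, Continuous fun t : ℝ => U t x)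

include hUadd hU0 in
theorem U_comp (t s : ℝ) (x : H) : U t (U s x) = U (t + s) x := by
  rw [hUadd]; rfl

include hUadd hU0 in
theorem U_inv (t : ℝ) (x : H) : U t (U (-t) x) = x := by
  rw [U_comp U hU0 hUadd, add_neg_cancel, hU0]; rfl

include hUiso in
theorem U_inner (t : ℝ) (x y : H) : ⟪U t x, U t y⟫ = ⟪x, y⟫ :=
  LinearIsometry.inner_map_map ⟨(U t).toLinearMap, hUiso t⟩ x y

include hU0 hUadd hUiso in
theorem U_adj (t : ℝ) (x y : H) : ⟪U t x, y⟫ = ⟪x, U (-t) y⟫ := by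
  conv_lhs => rw [← U_inv U hU0 hUadd t y]
  exact U_inner U hUiso t x (U (-t) y)

include hUcont in
/-- FTC: derivative of `t ↦ ∫ s in 0..t, f s` for `f s = U (c * s) x`-type integrands. -/
theorem hasDerivAt_integral (f : ℝ → H) (hf : Continuous f) (t : ℝ) :
    HasDerivAt (fun u : ℝ => ∫ s in (0:ℝ)..u, f s) (f t) t :=
  integral_hasDerivAt_right (hf.intervalIntegrable 0 t)
    (hf.aestronglyMeasurable.stronglyMeasurableAtFilter) hf.continuousAt

end RealStone

namespace RealStone

variable {H : Type*} [NormedAddCommGroup H] [InnerProductSpace ℝ H] [CompleteSpace H]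
variable (U : ℝ → H →L[ℝ] H)
variable (hU0 : U 0 = 1) (hUadd : ∀ t s : ℝ, U (t + s) = U t * U s)
    (hUiso : ∀ (t : ℝ) (x : H), ‖U t x‖ = ‖x‖)
    (hUcont : ∀ x : H, Continuous fun t : ℝ => U t x)

include hU0 hUadd in
/-- If `x` is in the domain of the generator, the orbit `t ↦ U t x` is differentiable
with derivative `U t (A x)`. -/
theorem hasDerivAt_orbit (x : (gen U).domain) (t : ℝ) :
    HasDerivAt (fun s : ℝ => U s (x : H)) (U t (gen U x)) t := by
  rw [hasDerivAt_iff_tendsto_slope_zero]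
  have key : ∀ h : ℝ, h⁻¹ • (U (t + h) (x:H) - U t (x:H))
      = U t (h⁻¹ • (U h (x:H) - (x:H))) := by
    intro h
    rw [map_smul, map_sub, U_comp U hU0 hUadd]
  simp only [key]
  exact ((U t).continuous.tendsto _).comp (gen_spec U x)

include hU0 hUadd hUcont in
theorem mollifier_mem (x : H) (t : ℝ) : (∫ s in (0:ℝ)..t, U s x) ∈ domSet U := by
  set F : ℝ → H := fun u => ∫ s in (0:ℝ)..u, U s x with hF
  refine ⟨U t x - x, ?_⟩
  have hFt : ∀ u, HasDerivAt F (U u x) u := fun u =>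
    hasDerivAt_integral U hUcont (fun s => U s x) (hUcont x) u
  have h1 : Tendsto (fun h : ℝ => h⁻¹ • (F (t + h) - F t)) (𝓝[≠] (0:ℝ)) (𝓝 (U t x)) :=
    (hasDerivAt_iff_tendsto_slope_zero.mp (hFt t))
  have h2 : Tendsto (fun h : ℝ => h⁻¹ • (F (0 + h) - F 0)) (𝓝[≠] (0:ℝ)) (𝓝 (U 0 x)) :=
    (hasDerivAt_iff_tendsto_slope_zero.mp (hFt 0))
  have key : ∀ᶠ h : ℝ in 𝓝[≠] (0:ℝ), h⁻¹ • (U h (F t) - F t)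
      = h⁻¹ • (F (t + h) - F t) - h⁻¹ • (F (0 + h) - F 0) := by
    filter_upwards with h
    have hint : ∀ a b : ℝ, IntervalIntegrable (fun s => U s x) MeasureTheory.volume a b :=
      fun a b => (hUcont x).intervalIntegrable a b
    have hcomm : U h (F t) = ∫ s in (0:ℝ)..t, U h (U s x) :=
      ((U h).intervalIntegral_comp_comm (hint 0 t)).symm
    have hcomp : (∫ s in (0:ℝ)..t, U h (U s x)) = ∫ s in (0:ℝ)..t, U (h + s) x := by
      congr 1; funext s; rw [U_comp U hU0 hUadd]
    have hshift : (∫ s in (0:ℝ)..t, U (h + s) x) = ∫ s in (h + 0)..(h + t), U s x :=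
      intervalIntegral.integral_comp_add_left (fun s => U s x) h
    have hsplit : (∫ s in (h+0:ℝ)..(h+t), U s x) = F (h + t) - F h := by
      rw [hF]
      simp only [add_zero]
      rw [eq_sub_iff_add_eq, add_comm]
      exact intervalIntegral.integral_add_adjacent_intervals (hint 0 h) (hint h (h+t))
    have hF0 : F 0 = 0 := intervalIntegral.integral_same
    rw [hcomm, hcomp, hshift, hsplit, hF0, add_comm h t, zero_add, ← smul_sub]
    congr 1
    abel
  rw [show (nhdsWithin 0 {(0:ℝ)}ᶜ) = 𝓝[≠] (0:ℝ) from rfl]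
  have keq : (fun h : ℝ => h⁻¹ • (U h (F t) - F t))
      =ᶠ[𝓝[≠] (0:ℝ)] fun h : ℝ => h⁻¹ • (F (t + h) - F t) - h⁻¹ • (F (0 + h) - F 0) := key
  have h12 : Tendsto (fun h : ℝ => h⁻¹ • (F (t + h) - F t) - h⁻¹ • (F (0 + h) - F 0))
      (𝓝[≠] (0:ℝ)) (𝓝 (U t x - x)) := by
    have := h1.sub h2
    rwa [hU0, show ((1 : H →L[ℝ] H) x) = x from rfl] at this
  exact Tendsto.congr' keq.symm h12

include hU0 hUadd hUcont in
theorem dense_domain : Dense ((gen U).domain : Set H) := by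
  intro x
  have hFt : ∀ u : ℝ, HasDerivAt (fun u : ℝ => ∫ s in (0:ℝ)..u, U s x) (U u x) u := fun u =>
    hasDerivAt_integral U hUcont (fun s => U s x) (hUcont x) u
  have h0 : Tendsto (fun t : ℝ => t⁻¹ • (∫ s in (0:ℝ)..t, U s x)) (𝓝[≠] (0:ℝ)) (𝓝 x) := by
    have := hasDerivAt_iff_tendsto_slope_zero.mp (hFt 0)
    rw [hU0] at this
    simp only [zero_add, intervalIntegral.integral_same, sub_zero] at this
    exact this
  refine mem_closure_of_tendsto h0 ?_
  filter_upwards with t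
  exact Submodule.smul_mem _ _ (mollifier_mem U hU0 hUadd hUcont x t)

include hU0 hUadd in
theorem commute_mem (t : ℝ) (x : H) (hx : x ∈ (gen U).domain) :
    ∃ h2 : U t x ∈ (gen U).domain, gen U ⟨U t x, h2⟩ = U t (gen U ⟨x, hx⟩) := by
  have key : Tendsto (fun h : ℝ => h⁻¹ • (U h (U t x) - U t x)) (nhdsWithin 0 {(0:ℝ)}ᶜ)
      (𝓝 (U t (gen U ⟨x, hx⟩))) := by
    have heq : ∀ h : ℝ, h⁻¹ • (U h (U t x) - U t x) = U t (h⁻¹ • (U h x - x)) := by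
      intro h
      rw [map_smul, map_sub]
      congr 2
      rw [U_comp U hU0 hUadd, U_comp U hU0 hUadd, add_comm]
    simp only [heq]
    exact ((U t).continuous.tendsto _).comp (gen_spec U ⟨x, hx⟩)
  exact ⟨⟨_, key⟩, gen_apply_eq U _ key⟩

end RealStone

namespace RealStone

variable {H : Type*} [NormedAddCommGroup H] [InnerProductSpace ℝ H] [CompleteSpace H]
variable (U : ℝ → H →L[ℝ] H)
variable (hU0 : U 0 = 1) (hUadd : ∀ t s : ℝ, U (t + s) = U t * U s)
    (hUiso : ∀ (t : ℝ) (x : H), ‖U t x‖ = ‖x‖)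
    (hUcont : ∀ x : H, Continuous fun t : ℝ => U t x)

include hU0 hUiso hUcont in
theorem skew (x y : (gen U).domain) : ⟪gen U x, (y:H)⟫ + ⟪(x:H), gen U y⟫ = 0 := by
  have hG : ∀ h : ℝ, ⟪h⁻¹ • (U h (x:H) - (x:H)), U h (y:H)⟫
      + ⟪(x:H), h⁻¹ • (U h (y:H) - (y:H))⟫ = 0 := by
    intro h
    rw [real_inner_smul_left, real_inner_smul_right, inner_sub_left, inner_sub_right,
      U_inner U hUiso]
    ring
  have hUy : Tendsto (fun h : ℝ => U h (y:H)) (𝓝[≠] (0:ℝ)) (𝓝 (y:H)) := by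
    have h1 : Tendsto (fun h : ℝ => U h (y:H)) (𝓝[≠] (0:ℝ)) (𝓝 (U 0 (y:H))) :=
      ((hUcont (y:H)).tendsto 0).mono_left nhdsWithin_le_nhds
    rwa [hU0, show ((1 : H →L[ℝ] H) (y:H)) = (y:H) from rfl] at h1
  have hlim : Tendsto (fun h : ℝ => ⟪h⁻¹ • (U h (x:H) - (x:H)), U h (y:H)⟫
      + ⟪(x:H), h⁻¹ • (U h (y:H) - (y:H))⟫) (𝓝[≠] (0:ℝ))
      (𝓝 (⟪gen U x, (y:H)⟫ + ⟪(x:H), gen U y⟫)) :=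
    ((gen_spec U x).inner hUy).add (tendsto_const_nhds.inner (gen_spec U y))
  simp only [hG] at hlim
  exact tendsto_nhds_unique hlim
    (tendsto_const_nhds : Tendsto (fun _ : ℝ => (0:ℝ)) (𝓝[≠] (0:ℝ)) _)

include hU0 hUiso hUcont in
theorem formal_adjoint : (gen U).IsFormalAdjoint (-(gen U)) := by
  intro x y
  have hy : (y : H) ∈ (gen U).domain := y.2
  rw [LinearPMap.neg_apply, inner_neg_right]
  have hsk := skew U hU0 hUiso hUcont x ⟨(y:H), hy⟩
  have h2 : gen U y = gen U ⟨(y:H), hy⟩ := rfl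
  rw [h2]
  linarith [hsk]

include hU0 hUadd hUiso hUcont in
theorem neg_le_adjoint : -(gen U) ≤ (gen U).adjoint :=
  (formal_adjoint U hU0 hUiso hUcont).le_adjoint (dense_domain U hU0 hUadd hUcont)

end RealStone

namespace RealStone

variable {H : Type*} [NormedAddCommGroup H] [InnerProductSpace ℝ H] [CompleteSpace H]
variable (U : ℝ → H →L[ℝ] H)
variable (hU0 : U 0 = 1) (hUadd : ∀ t s : ℝ, U (t + s) = U t * U s)
    (hUiso : ∀ (t : ℝ) (x : H), ‖U t x‖ = ‖x‖)
    (hUcont : ∀ x : H, Continuous fun t : ℝ => U t x)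

include hU0 hUadd hUiso hUcont in
theorem adjoint_mem (y : H) (hy : y ∈ (gen U).adjoint.domain) :
    ∃ hym : y ∈ (gen U).domain,
      gen U ⟨y, hym⟩ = -((gen U).adjoint ⟨y, hy⟩) := by
  have hd := dense_domain U hU0 hUadd hUcont
  set T := gen U with hT
  set z := T.adjoint ⟨y, hy⟩ with hz
  have hform := LinearPMap.adjoint_isFormalAdjoint hd
  have hzy : ∀ x : T.domain, ⟪z, (x:H)⟫ = ⟪y, T x⟫ := fun x => hform ⟨y, hy⟩ x
  -- the "primitive" of `U (-s) z`
  set w : ℝ → H := fun t => ∫ s in (0:ℝ)..t, U (-s) z with hw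
  have hcontz : Continuous fun s : ℝ => U (-s) z := (hUcont z).comp continuous_neg
  have hwderiv : ∀ t, HasDerivAt w (U (-t) z) t := fun t =>
    hasDerivAt_integral U hUcont (fun s => U (-s) z) hcontz t
  -- key identity : ∀ x, ⟪U t x, y⟫ = ⟪x, y + w t⟫
  have hkey : ∀ (t : ℝ) (x : H), ⟪U t x, y⟫ = ⟪x, y + w t⟫ := by
    intro t
    have hEq : Set.EqOn (fun x : H => ⟪U t x, y⟫) (fun x : H => ⟪x, y + w t⟫)
        (T.domain : Set H) := by
      intro x hx
      set xd : T.domain := ⟨x, hx⟩ with hxd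
      -- derivative of s ↦ ⟪U s x, y⟫ is ⟪U s x, z⟫
      have hg : ∀ s : ℝ, HasDerivAt (fun s : ℝ => ⟪U s x, y⟫) ⟪U s x, z⟫ s := by
        intro s
        have h1 : HasDerivAt (fun s : ℝ => ⟪U s x, y⟫) (⟪U s x, (0:H)⟫ + ⟪U s (T xd), y⟫) s :=
          HasDerivAt.inner ℝ (hasDerivAt_orbit U hU0 hUadd xd s) (hasDerivAt_const s y)
        have h2 : ⟪U s x, (0:H)⟫ + ⟪U s (T xd), y⟫ = ⟪U s x, z⟫ := by
          obtain ⟨hmem, hcomm⟩ := commute_mem U hU0 hUadd s x hx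
          rw [inner_zero_right, zero_add, ← hcomm]
          have h3 := hzy ⟨U s x, hmem⟩
          rw [real_inner_comm]
          exact h3.symm.trans (real_inner_comm z (U s x)).symm
        rwa [h2] at h1
      have hcontg : Continuous fun s : ℝ => ⟪U s x, z⟫ :=
        (hUcont x).inner continuous_const
      have hftc : (∫ s in (0:ℝ)..t, ⟪U s x, z⟫)
          = ⟪U t x, y⟫ - ⟪U 0 x, y⟫ :=
        intervalIntegral.integral_eq_sub_of_hasDerivAt (fun s _ => hg s)
          (hcontg.intervalIntegrable 0 t)
      have hpull : (∫ s in (0:ℝ)..t, ⟪U s x, z⟫) = ⟪x, w t⟫ := by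
        have hrw : (fun s : ℝ => ⟪U s x, z⟫) = fun s : ℝ => innerSL ℝ x (U (-s) z) := by
          funext s
          rw [innerSL_apply_apply, U_adj U hU0 hUadd hUiso]
        rw [hrw, (innerSL ℝ x).intervalIntegral_comp_comm (hcontz.intervalIntegrable 0 t)]
        rfl
      have hU0x : ⟪U 0 x, y⟫ = ⟪x, y⟫ := by rw [hU0]; rfl
      have := hftc
      rw [hpull, hU0x] at this
      simp only [inner_add_right]
      linarith [this]
    exact fun x => congrFun (Continuous.ext_on hd
      (((U t).continuous).inner continuous_const)
      ((continuous_id.inner continuous_const)) hEq) x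
  -- hence U (-t) y = y + w t
  have hUy : ∀ t : ℝ, U (-t) y = y + w t := by
    intro t
    apply ext_inner_left ℝ
    intro v
    rw [← U_adj U hU0 hUadd hUiso, hkey t v]
  -- differentiate at 0
  have hphi : Tendsto (fun t : ℝ => t⁻¹ • (U (-t) y - y)) (𝓝[≠] (0:ℝ)) (𝓝 z) := by
    have h1 : Tendsto (fun t : ℝ => t⁻¹ • (w (0 + t) - w 0)) (𝓝[≠] (0:ℝ)) (𝓝 (U (-0) z)) :=
      hasDerivAt_iff_tendsto_slope_zero.mp (hwderiv 0)
    rw [neg_zero, hU0] at h1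
    have heq : ∀ t : ℝ, t⁻¹ • (U (-t) y - y) = t⁻¹ • (w (0 + t) - w 0) := by
      intro t
      rw [hUy t, zero_add]
      have hw0 : w 0 = 0 := intervalIntegral.integral_same
      rw [hw0, sub_zero, add_sub_cancel_left]
    simp only [heq]
    exact h1
  have hneg : Tendsto (fun h : ℝ => -h) (𝓝[≠] (0:ℝ)) (𝓝[≠] (0:ℝ)) := by
    rw [tendsto_nhdsWithin_iff]
    constructor
    · have := (continuous_neg.tendsto (0:ℝ)).mono_left (nhdsWithin_le_nhds (s := {(0:ℝ)}ᶜ))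
      simpa using this
    · filter_upwards [self_mem_nhdsWithin] with h hh
      simp only [Set.mem_compl_iff, Set.mem_singleton_iff] at hh ⊢
      exact neg_ne_zero.mpr hh
  have hpsi : Tendsto (fun h : ℝ => h⁻¹ • (U h y - y)) (𝓝[≠] (0:ℝ)) (𝓝 (-z)) := by
    have hcomp := hphi.comp hneg
    have heq : ∀ h : ℝ, (fun t : ℝ => t⁻¹ • (U (-t) y - y)) (-h)
        = -(h⁻¹ • (U h y - y)) := by
      intro h
      simp only [neg_neg, inv_neg, neg_smul]
    simp only [Function.comp_def, heq] at hcomp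
    have := hcomp.neg
    simpa using this
  exact ⟨⟨-z, hpsi⟩, gen_apply_eq U _ hpsi⟩

end RealStone

namespace RealStone

variable {H : Type*} [NormedAddCommGroup H] [InnerProductSpace ℝ H] [CompleteSpace H]

theorem adjoint_anti {S T : H →ₗ.[ℝ] H} (hS : Dense (S.domain : Set H))
    (hT : Dense (T.domain : Set H)) (hle : S ≤ T) : T.adjoint ≤ S.adjoint := by
  have hform : S.IsFormalAdjoint T.adjoint := by
    intro x y
    have h1 := LinearPMap.adjoint_isFormalAdjoint hT y (Submodule.inclusion hle.1 x)
    have h2 : S x = T (Submodule.inclusion hle.1 x) := LinearPMap.apply_comp_inclusion hle x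
    have h3 : ((Submodule.inclusion hle.1 x : T.domain) : H) = (x : H) := rfl
    rw [h3] at h1
    rw [h2, real_inner_comm, h1.symm, real_inner_comm]
  exact hform.le_adjoint hS

theorem neg_mono {S T : H →ₗ.[ℝ] H} (h : S ≤ T) : -S ≤ -T := by
  refine ⟨h.1, ?_⟩
  intro x y hxy
  rw [LinearPMap.neg_apply, LinearPMap.neg_apply]
  congr 1
  exact h.2 hxy

end RealStone

namespace RealStone

variable {H : Type*} [NormedAddCommGroup H] [InnerProductSpace ℝ H] [CompleteSpace H]
variable (U : ℝ → H →L[ℝ] H)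
variable (hU0 : U 0 = 1) (hUadd : ∀ t s : ℝ, U (t + s) = U t * U s)
    (hUiso : ∀ (t : ℝ) (x : H), ‖U t x‖ = ‖x‖)
    (hUcont : ∀ x : H, Continuous fun t : ℝ => U t x)

include hU0 hUadd hUiso hUcont in
theorem adjoint_domain_eq : (gen U).adjoint.domain = (gen U).domain := by
  apply le_antisymm
  · intro y hy
    exact (adjoint_mem U hU0 hUadd hUiso hUcont y hy).choose
  · exact (neg_le_adjoint U hU0 hUadd hUiso hUcont).1

include hU0 hUadd hUiso hUcont in
theorem adjoint_neg (x : H) (hx : x ∈ (gen U).domain) (hx' : x ∈ (gen U).adjoint.domain) :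
    (gen U).adjoint ⟨x, hx'⟩ = -(gen U) ⟨x, hx⟩ := by
  obtain ⟨hym, hval⟩ := adjoint_mem U hU0 hUadd hUiso hUcont x hx'
  have h2 : gen U ⟨x, hx⟩ = -((gen U).adjoint ⟨x, hx'⟩) := hval
  rw [h2, neg_neg]

include hU0 hUadd hUiso hUcont in
theorem adjoint_eq_neg : (gen U).adjoint = -(gen U) := by
  apply LinearPMap.ext (show (gen U).adjoint.domain = (-(gen U)).domain from adjoint_domain_eq U hU0 hUadd hUiso hUcont)
  intro x hx' hy
  rw [LinearPMap.neg_apply]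
  exact adjoint_neg U hU0 hUadd hUiso hUcont x hy hx'

end RealStone

namespace RealStone

variable {H : Type*} [NormedAddCommGroup H] [InnerProductSpace ℝ H] [CompleteSpace H]
variable (U : ℝ → H →L[ℝ] H)
variable (hU0 : U 0 = 1) (hUadd : ∀ t s : ℝ, U (t + s) = U t * U s)
    (hUiso : ∀ (t : ℝ) (x : H), ‖U t x‖ = ‖x‖)
    (hUcont : ∀ x : H, Continuous fun t : ℝ => U t x)

include hU0 hUadd hUiso hUcont in
theorem uniqueness (A' : H →ₗ.[ℝ] H) (hdense : Dense (A'.domain : Set H))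
    (hdomeq : A'.adjoint.domain = A'.domain)
    (hanti : ∀ (x : H) (hx : x ∈ A'.domain) (hx' : x ∈ A'.adjoint.domain),
      A'.adjoint ⟨x, hx'⟩ = -A' ⟨x, hx⟩)
    (htend : ∀ x : A'.domain, Tendsto (fun h : ℝ => h⁻¹ • (U h (x : H) - (x : H)))
      (nhdsWithin 0 {(0 : ℝ)}ᶜ) (nhds (A' x))) : A' = gen U := by
  have hle : A' ≤ gen U := by
    refine ⟨fun x hx => ⟨A' ⟨x, hx⟩, htend ⟨x, hx⟩⟩, ?_⟩
    rintro ⟨x, hx⟩ ⟨y, hy⟩ (h : x = y)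
    subst h
    have := htend ⟨x, hx⟩
    exact (gen_apply_eq U hy this).symm
  have hA'adj : A'.adjoint = -A' := by
    apply LinearPMap.ext (show A'.adjoint.domain = (-A').domain from hdomeq)
    intro x hx' hy
    rw [LinearPMap.neg_apply]
    exact hanti x hy hx'
  have hadj : (gen U).adjoint ≤ A'.adjoint :=
    adjoint_anti hdense (dense_domain U hU0 hUadd hUcont) hle
  rw [hA'adj, adjoint_eq_neg U hU0 hUadd hUiso hUcont] at hadj
  have hge : gen U ≤ A' := by
    have := neg_mono hadj
    rwa [neg_neg, neg_neg] at this
  exact LinearPMap.eq_of_le_of_domain_eq hle (le_antisymm hle.1 hge.1)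

end RealStone

/-- **Stone's theorem in a real Hilbert space.**  If `U : ℝ → B(H)` is a strongly
continuous one-parameter group of unitary operators on the real Hilbert space `H`, then
the generator `A`, defined on
`D(A) = {x : lim_{h→0} h⁻¹(U_h x − x) exists}` by `Ax = lim_{h→0} h⁻¹(U_h x − x)`,
is densely defined, anti-selfadjoint, commutes with every `U_t`, generates `U`
(`U_t = e^{tA_ℂ}|_H`, expressed by the derivative property), and is the unique
anti-selfadjoint operator with this property. -/
theorem real_stone_theorem (H : Type*) [NormedAddCommGroup H] [InnerProductSpace ℝ H]
    [CompleteSpace H] (U : ℝ → H →L[ℝ] H)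
    (hU0 : U 0 = 1) (hUadd : ∀ t s : ℝ, U (t + s) = U t * U s)
    (hUiso : ∀ (t : ℝ) (x : H), ‖U t x‖ = ‖x‖)
    (hUcont : ∀ x : H, Continuous fun t : ℝ => U t x) :
    ∃ A : H →ₗ.[ℝ] H,
      (∀ x : H, x ∈ A.domain ↔
        ∃ y : H, Tendsto (fun h : ℝ => h⁻¹ • (U h x - x)) (nhdsWithin 0 {(0 : ℝ)}ᶜ) (nhds y)) ∧
      (∀ x : A.domain, Tendsto (fun h : ℝ => h⁻¹ • (U h (x : H) - (x : H)))
        (nhdsWithin 0 {(0 : ℝ)}ᶜ) (nhds (A x))) ∧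
      Dense (A.domain : Set H) ∧
      IsAntiSelfAdjointPMap A ∧
      (∀ (t : ℝ) (x : H) (hx : x ∈ A.domain),
        ∃ h2 : U t x ∈ A.domain, A ⟨U t x, h2⟩ = U t (A ⟨x, hx⟩)) ∧
      (∀ A' : H →ₗ.[ℝ] H, Dense (A'.domain : Set H) → IsAntiSelfAdjointPMap A' →
        (∀ x : A'.domain, Tendsto (fun h : ℝ => h⁻¹ • (U h (x : H) - (x : H)))
          (nhdsWithin 0 {(0 : ℝ)}ᶜ) (nhds (A' x))) → A' = A) := by
  refine ⟨RealStone.gen U, fun x => Iff.rfl, RealStone.gen_spec U,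
    RealStone.dense_domain U hU0 hUadd hUcont,
    ⟨RealStone.adjoint_domain_eq U hU0 hUadd hUiso hUcont,
      RealStone.adjoint_neg U hU0 hUadd hUiso hUcont⟩,
    RealStone.commute_mem U hU0 hUadd, ?_⟩
  rintro A' hdense ⟨hdomeq, hanti⟩ htend
  exact RealStone.uniqueness U hU0 hUadd hUiso hUcont A' hdense hdomeq hanti htend
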